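/- Let Γ be a metrically homogeneous graph of generic type with diameter δ and let σ be a permutation of {1,…,δ} which sends Γ to another metrically homogeneous graph and satisfies σ(1) = 2. Then either σ = ρ, or δ = 3 and σ is the transposition (1,2). -/

import Mathlib

open SimpleGraph

-- Auxiliary lemmas
private lemma walk_mid {V : Type*} {G : SimpleGraph V} (hconn : G.Connected) :
    ∀ {x y : V} (p : G.Walk x y) (k : ℕ), k ≤ p.length →
      ∃ z, G.dist x z ≤ k ∧ G.dist z y + k ≤ p.length := by
  intro x y p
  induction p with
  | @nil u =>
    intro k hk
    simp only [SimpleGraph.Walk.length_nil, Nat.le_zero] at hk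
    subst hk
    exact ⟨u, le_of_eq (SimpleGraph.dist_self (v := u)), by simp [SimpleGraph.dist_self]⟩
  | @cons a b c h q ih =>
    intro k hk
    cases k with
    | zero =>
      exact ⟨a, by simp [SimpleGraph.dist_self], by simpa using SimpleGraph.dist_le (q.cons h)⟩
    | succ n =>
      obtain ⟨z, hz1, hz2⟩ := ih n (by simpa using hk)
      have hab : G.dist a b ≤ 1 := by simpa using SimpleGraph.dist_le h.toWalk
      have htri : G.dist a z ≤ G.dist a b + G.dist b z := hconn.dist_triangle
      refine ⟨z, by omega, ?_⟩
      simp only [SimpleGraph.Walk.length_cons]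
      omega

private lemma exists_mid {V : Type*} {G : SimpleGraph V} (hconn : G.Connected) {x y : V}
    {k : ℕ} (hk : k ≤ G.dist x y) :
    ∃ z, G.dist x z = k ∧ G.dist z y = G.dist x y - k := by
  obtain ⟨p, hp⟩ := hconn.exists_walk_length_eq_dist x y
  obtain ⟨z, h1, h2⟩ := walk_mid hconn p k (by omega)
  have h3 : G.dist x y ≤ G.dist x z + G.dist z y := hconn.dist_triangle
  exact ⟨z, by omega, by omega⟩

section Defs

variable {V : Type*}

/-- A graph is *metrically homogeneous* if it is connected and every
distance-preserving map defined on a finite set of vertices extends to a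
distance-preserving bijection of the whole vertex set (with respect to the
path metric). -/
def IsMetricallyHomogeneous (G : SimpleGraph V) : Prop :=
  G.Connected ∧
  ∀ (s : Finset V) (f : V → V),
    (∀ x ∈ s, ∀ y ∈ s, G.dist (f x) (f y) = G.dist x y) →
    ∃ g : V ≃ V, (∀ x y : V, G.dist (g x) (g y) = G.dist x y) ∧ ∀ x ∈ s, g x = f x

/-- `δ` is the diameter of `G` (with respect to the path metric). -/
def HasDiameter (G : SimpleGraph V) (δ : ℕ) : Prop :=
  (∀ x y : V, G.dist x y ≤ δ) ∧ ∃ x y : V, G.dist x y = δ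

/-- The set of (nonzero) distances realized in `G`. -/
def DistSet (G : SimpleGraph V) : Set ℕ :=
  {n : ℕ | 0 < n ∧ ∃ x y : V, G.dist x y = n}

/-- `G` is of *generic type*: any two vertices at distance `2` have infinitely
many common neighbors forming an independent set, and the set of neighbors of
any fixed vertex (with the induced metric) carries no non-trivial equivalence
relation invariant under all of its self-isometries. -/
def GenericType (G : SimpleGraph V) : Prop :=
  (∀ x y : V, G.dist x y = 2 →
    {z : V | G.Adj x z ∧ G.Adj y z}.Infinite ∧
    ∀ z w : V, (G.Adj x z ∧ G.Adj y z) → (G.Adj x w ∧ G.Adj y w) → ¬ G.Adj z w) ∧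
  ∀ v : V, ∀ r : G.neighborSet v → G.neighborSet v → Prop,
    Equivalence r →
    (∀ g : G.neighborSet v ≃ G.neighborSet v,
      (∀ x y : G.neighborSet v, G.dist (g x : V) (g y : V) = G.dist (x : V) (y : V)) →
      ∀ x y : G.neighborSet v, r x y → r (g x) (g y)) →
    (∀ x y, r x y) ∨ (∀ x y, r x y → x = y)

/-- A triangle of type `(a,b,c)` is realized in `G`. -/
def RealizesTriangle (G : SimpleGraph V) (a b c : ℕ) : Prop :=
  ∃ x y z : V, G.dist x y = a ∧ G.dist y z = b ∧ G.dist x z = c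

/-- `G` contains a triangle (three distinct vertices) of perimeter `p`. -/
def RealizesPerimeter (G : SimpleGraph V) (p : ℕ) : Prop :=
  ∃ x y z : V, x ≠ y ∧ y ≠ z ∧ x ≠ z ∧ G.dist x y + G.dist y z + G.dist x z = p

/-- `k` is the parameter `K₁` of `G`: the least `m` such that a triangle of
type `(m,m,1)` is realized in `G`. -/
def IsK1 (G : SimpleGraph V) (k : ℕ) : Prop :=
  IsLeast {m : ℕ | RealizesTriangle G m m 1} k

/-- `k` is the parameter `K₂` of `G`: the greatest `m` such that a triangle of
type `(m,m,1)` is realized in `G`. -/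
def IsK2 (G : SimpleGraph V) (k : ℕ) : Prop :=
  IsGreatest {m : ℕ | RealizesTriangle G m m 1} k

/-- `c` is the parameter `C₀` of `G` (relative to the diameter `δ`): the least
even number greater than `2δ` such that no triangle of perimeter `c` occurs. -/
def IsC0 (G : SimpleGraph V) (δ c : ℕ) : Prop :=
  IsLeast {c' : ℕ | Even c' ∧ 2 * δ < c' ∧ ¬ RealizesPerimeter G c'} c

/-- `c` is the parameter `C₁` of `G` (relative to the diameter `δ`): the least
odd number greater than `2δ` such that no triangle of perimeter `c` occurs. -/
def IsC1 (G : SimpleGraph V) (δ c : ℕ) : Prop :=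
  IsLeast {c' : ℕ | Odd c' ∧ 2 * δ < c' ∧ ¬ RealizesPerimeter G c'} c

/-- `G` (of diameter `δ`) is antipodal: every vertex has a unique vertex at
distance `δ` from it. -/
def IsAntipodal (G : SimpleGraph V) (δ : ℕ) : Prop :=
  ∀ v : V, ∃! w : V, G.dist v w = δ

/-- `G` is bipartite. -/
def IsBipartiteGraph (G : SimpleGraph V) : Prop :=
  ∃ f : V → Bool, ∀ x y : V, G.Adj x y → f x ≠ f y

/-- `G` is complete multipartite: there is an equivalence relation such that
two vertices are adjacent exactly when they are inequivalent. -/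
def IsCompleteMultipartiteGraph (G : SimpleGraph V) : Prop :=
  ∃ r : V → V → Prop, Equivalence r ∧ ∀ x y : V, G.Adj x y ↔ ¬ r x y

/-- `G` is an `n`-cycle. -/
def IsNCycle (G : SimpleGraph V) (n : ℕ) : Prop :=
  ∃ e : V ≃ ZMod n, ∀ x y : V, G.Adj x y ↔ (e x - e y = 1 ∨ e y - e x = 1)

/-- The permutation `ρ` of `{1,…,δ}`. -/
def rhoFun (δ i : ℕ) : ℕ := if 2 * i ≤ δ then 2 * i else 2 * (δ - i) + 1

/-- The permutation `ρ⁻¹` of `{1,…,δ}`. -/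
def rhoInvFun (δ i : ℕ) : ℕ := if Even i then i / 2 else δ - (i - 1) / 2

/-- The involution `τ_ε` of `{1,…,δ}`, for `ε = 0` or `1`. -/
def tauFun (δ ε i : ℕ) : ℕ := if Odd (min i (δ + ε - i)) then δ + ε - i else i

/-- The `n`-cycle graph on `ZMod n`. -/
def zmodCycleGraph (n : ℕ) : SimpleGraph (ZMod n) where
  Adj x y := x ≠ y ∧ (x - y = 1 ∨ y - x = 1)
  symm := ⟨fun x y h => ⟨h.1.symm, h.2.symm⟩⟩
  loopless := ⟨fun x h => h.1 rfl⟩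

end Defs

/-- if `σ(1) = 2` then `σ = ρ`, or `δ = 3` and `σ` is the
transposition `(1,2)`. -/
theorem sigma_one_eq_two_implies_rho {V : Type*} (G H : SimpleGraph V) (δ : ℕ)
    (σ : Equiv.Perm ℕ)
    (hG : IsMetricallyHomogeneous G) (hgen : GenericType G)
    (hdiam : HasDiameter G δ)
    (hperm : ∀ i ∈ Finset.Icc 1 δ, σ i ∈ Finset.Icc 1 δ)
    (hH : IsMetricallyHomogeneous H)
    (htw : ∀ x y : V, x ≠ y → H.dist x y = σ (G.dist x y))
    (h1 : σ 1 = 2) :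
    (∀ i ∈ Finset.Icc 1 δ, σ i = rhoFun δ i) ∨
    (δ = 3 ∧ σ 1 = 2 ∧ σ 2 = 1 ∧ σ 3 = 3) := by
  classical
  -- σ restricted to `Finset.Icc 1 δ` is a bijection of it
  have hinj : Function.Injective σ := σ.injective
  have himg : (Finset.Icc 1 δ).image σ = Finset.Icc 1 δ := by
    apply Finset.eq_of_subset_of_card_le
    · intro k hk
      obtain ⟨i, hi, rfl⟩ := Finset.mem_image.mp hk
      exact hperm i hi
    · rw [Finset.card_image_of_injective _ hinj]
  have hgs : ∀ k, σ (σ.symm k) = k := fun k => σ.apply_symm_apply k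
  have hsymm_mem : ∀ k, 1 ≤ k → k ≤ δ → 1 ≤ σ.symm k ∧ σ.symm k ≤ δ := by
    intro k hk1 hk2
    have hk : k ∈ (Finset.Icc 1 δ).image σ := by
      rw [himg]; exact Finset.mem_Icc.mpr ⟨hk1, hk2⟩
    obtain ⟨i, hi, hik⟩ := Finset.mem_image.mp hk
    have hsk : σ.symm k = i := by rw [← hik, Equiv.symm_apply_apply]
    rw [hsk]
    exact ⟨(Finset.mem_Icc.mp hi).1, (Finset.mem_Icc.mp hi).2⟩
  have hmem : ∀ i, 1 ≤ i → i ≤ δ → 1 ≤ σ i ∧ σ i ≤ δ := by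
    intro i h1i h2i
    have := hperm i (Finset.mem_Icc.mpr ⟨h1i, h2i⟩)
    exact ⟨(Finset.mem_Icc.mp this).1, (Finset.mem_Icc.mp this).2⟩
  have hsymm2 : σ.symm 2 = 1 := by rw [← h1, Equiv.symm_apply_apply]
  -- small diameters
  rcases Nat.lt_or_ge δ 4 with h4 | h4
  · interval_cases δ
    · left; intro i hi; rw [Finset.mem_Icc] at hi; omega
    · exfalso; have := hmem 1 le_rfl le_rfl; omega
    · -- δ = 2
      have hs2 : σ 2 = 1 := by
        have hb := hmem 2 (by omega) (by omega)
        have hne : σ 2 ≠ 2 := by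
          intro h; rw [← h1] at h; have := hinj h; omega
        omega
      left; intro i hi; rw [Finset.mem_Icc] at hi
      obtain ⟨hi1, hi2⟩ := hi
      interval_cases i
      · rw [h1]; rfl
      · rw [hs2]; rfl
    · -- δ = 3
      have hb2 := hmem 2 (by omega) (by omega)
      have hb3 := hmem 3 (by omega) (by omega)
      have hne2 : σ 2 ≠ 2 := by
        intro h; rw [← h1] at h; have := hinj h; omega
      have hne3 : σ 3 ≠ 2 := by
        intro h; rw [← h1] at h; have := hinj h; omega
      have hne23 : σ 3 ≠ σ 2 := by
        intro h; have := hinj h; omega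
      have hc : σ 2 = 1 ∨ σ 2 = 3 := by omega
      rcases hc with hc | hc
      · right
        have hs3 : σ 3 = 3 := by omega
        exact ⟨rfl, h1, hc, hs3⟩
      · left
        have hs3 : σ 3 = 1 := by omega
        intro i hi; rw [Finset.mem_Icc] at hi
        obtain ⟨hi1, hi2⟩ := hi
        interval_cases i
        · rw [h1]; rfl
        · rw [hc]; rfl
        · rw [hs3]; rfl
  -- main case : δ ≥ 4
  · have hGconn := hG.1
    have hHconn := hH.1
    obtain ⟨xd, yd, hxyd⟩ := hdiam.2
    have hne_of : ∀ (W : SimpleGraph V) (x y : V) (n : ℕ),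
        W.dist x y = n → 1 ≤ n → x ≠ y := by
      rintro W x y n hd hn rfl
      rw [SimpleGraph.dist_self] at hd; omega
    have hrealG : ∀ n, 1 ≤ n → n ≤ δ → ∃ x y : V, G.dist x y = n := by
      intro n h1n h2n
      obtain ⟨z, hz1, _⟩ := exists_mid hGconn (x := xd) (y := yd) (k := n)
        (by rw [hxyd]; omega)
      exact ⟨xd, z, hz1⟩
    have htriG : ∀ a b, 1 ≤ a → 1 ≤ b → a + b ≤ δ →
        σ (a + b) ≤ σ a + σ b ∧ σ a ≤ σ (a + b) + σ b := by
      intro a b ha hb hab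
      obtain ⟨x, y, hxy⟩ := hrealG (a + b) (by omega) hab
      obtain ⟨z, hz1, hz2⟩ := exists_mid hGconn (x := x) (y := y) (k := a)
        (by rw [hxy]; omega)
      rw [hxy] at hz2
      have hz2' : G.dist z y = b := by omega
      have hxz : x ≠ z := hne_of G x z a hz1 ha
      have hzy : z ≠ y := hne_of G z y b hz2' hb
      have hxyne : x ≠ y := hne_of G x y (a + b) hxy (by omega)
      have e1 := htw x z hxz
      have e2 := htw z y hzy
      have e3 := htw x y hxyne
      rw [hz1] at e1; rw [hz2'] at e2; rw [hxy] at e3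
      have e2' : H.dist y z = σ b := by rw [SimpleGraph.dist_comm]; exact e2
      have t1 : H.dist x y ≤ H.dist x z + H.dist z y := hHconn.dist_triangle
      have t2 : H.dist x z ≤ H.dist x y + H.dist y z := hHconn.dist_triangle
      constructor <;> omega
    have hrealH : ∀ n, 1 ≤ n → n ≤ δ → ∃ x y : V, H.dist x y = n := by
      intro n h1n h2n
      obtain ⟨m1, m2⟩ := hsymm_mem n h1n h2n
      obtain ⟨x, y, hxy⟩ := hrealG (σ.symm n) m1 m2
      have hxyne : x ≠ y := hne_of G x y _ hxy m1
      exact ⟨x, y, by rw [htw x y hxyne, hxy, hgs]⟩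
    have htriH : ∀ a b, 1 ≤ a → 1 ≤ b → a + b ≤ δ →
        σ.symm (a + b) ≤ σ.symm a + σ.symm b ∧
        σ.symm a ≤ σ.symm (a + b) + σ.symm b := by
      intro a b ha hb hab
      obtain ⟨x, y, hxy⟩ := hrealH (a + b) (by omega) hab
      obtain ⟨z, hz1, hz2⟩ := exists_mid hHconn (x := x) (y := y) (k := a)
        (by rw [hxy]; omega)
      rw [hxy] at hz2
      have hz2' : H.dist z y = b := by omega
      have hxz : x ≠ z := hne_of H x z a hz1 ha
      have hzy : z ≠ y := hne_of H z y b hz2' hb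
      have hxyne : x ≠ y := hne_of H x y (a + b) hxy (by omega)
      have e1 : G.dist x z = σ.symm a := by
        have e := htw x z hxz
        rw [hz1] at e
        calc G.dist x z = σ.symm (σ (G.dist x z)) := (σ.symm_apply_apply _).symm
        _ = σ.symm a := by rw [← e]
      have e2 : G.dist z y = σ.symm b := by
        have e := htw z y hzy
        rw [hz2'] at e
        calc G.dist z y = σ.symm (σ (G.dist z y)) := (σ.symm_apply_apply _).symm
        _ = σ.symm b := by rw [← e]
      have e3 : G.dist x y = σ.symm (a + b) := by
        have e := htw x y hxyne
        rw [hxy] at e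
        calc G.dist x y = σ.symm (σ (G.dist x y)) := (σ.symm_apply_apply _).symm
        _ = σ.symm (a + b) := by rw [← e]
      have e2' : G.dist y z = σ.symm b := by rw [SimpleGraph.dist_comm]; exact e2
      have t1 : G.dist x y ≤ G.dist x z + G.dist z y := hGconn.dist_triangle
      have t2 : G.dist x z ≤ G.dist x y + G.dist y z := hGconn.dist_triangle
      constructor <;> omega
    -- arithmetic: upper bound σ i ≤ 2 i
    have hub : ∀ i, 1 ≤ i → i ≤ δ → σ i ≤ 2 * i := by
      intro i
      induction i with
      | zero => omega
      | succ n ih =>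
        intro _ hn
        rcases Nat.eq_zero_or_pos n with h0 | h0
        · subst h0; rw [h1]
        · have ht := (htriG n 1 h0 le_rfl (by omega)).1
          have := ih h0 (by omega)
          omega
    have hlow : ∀ k, 1 ≤ k → k ≤ δ → k ≤ 2 * σ.symm k := by
      intro k hk1 hk2
      obtain ⟨m1, m2⟩ := hsymm_mem k hk1 hk2
      have := hub (σ.symm k) m1 m2
      rw [hgs] at this; exact this
    have heven : ∀ k, 1 ≤ k → 2 * k ≤ δ → σ.symm (2 * k) ≤ k := by
      intro k
      induction k with
      | zero => omega
      | succ n ih =>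
        intro _ h2
        rcases Nat.eq_zero_or_pos n with h0 | h0
        · subst h0; norm_num [hsymm2]
        · have ht := (htriH (2 * n) 2 (by omega) (by omega) (by omega)).1
          rw [show 2 * n + 2 = 2 * (n + 1) from by ring] at ht
          have := ih h0 (by omega)
          rw [hsymm2] at ht
          omega
    have hσeven : ∀ k, 1 ≤ k → 2 * k ≤ δ → σ k = 2 * k := by
      intro k h1k h2k
      have ha := heven k h1k h2k
      have hb := hlow (2 * k) (by omega) h2k
      have hk : σ.symm (2 * k) = k := by omega
      calc σ k = σ (σ.symm (2 * k)) := by rw [hk]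
      _ = 2 * k := hgs _
    set m := δ / 2 with hm_def
    have hm2 : 2 ≤ m := by omega
    have hodd_mem : ∀ j, 2 * j + 1 ≤ δ →
        m + 1 ≤ σ.symm (2 * j + 1) ∧ σ.symm (2 * j + 1) ≤ δ := by
      intro j hj
      obtain ⟨m1, m2⟩ := hsymm_mem (2 * j + 1) (by omega) hj
      refine ⟨?_, m2⟩
      by_contra hcon
      push_neg at hcon
      have he := hσeven (σ.symm (2 * j + 1)) m1 (by omega)
      rw [hgs] at he
      omega
    have hstep : ∀ j, 2 * j + 3 ≤ δ →
        σ.symm (2 * j + 3) ≤ σ.symm (2 * j + 1) + 1 ∧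
        σ.symm (2 * j + 1) ≤ σ.symm (2 * j + 3) + 1 := by
      intro j hj
      have ht := htriH (2 * j + 1) 2 (by omega) (by omega) (by omega)
      rw [show 2 * j + 1 + 2 = 2 * j + 3 from by ring, hsymm2] at ht
      exact ⟨by omega, by omega⟩
    have hinj' : ∀ a b : ℕ, σ.symm a = σ.symm b → a = b :=
      fun a b h => σ.symm.injective h
    set J := δ - m - 1 with hJ_def
    have hdich : σ.symm 3 = σ.symm 1 + 1 ∨ σ.symm 3 + 1 = σ.symm 1 := by
      have hs := hstep 0 (by omega)
      norm_num at hs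
      have hne : σ.symm 3 ≠ σ.symm 1 := by
        intro h; have := hinj' _ _ h; omega
      omega
    rcases hdich with hdir | hdir
    · -- increasing case : contradiction since δ ≥ 4
      exfalso
      have hup : ∀ j, j ≤ J → σ.symm (2 * j + 1) = σ.symm 1 + j := by
        intro j
        induction j using Nat.strong_induction_on with
        | _ j ih =>
          rcases j with _ | j'
          · intro _; norm_num
          rcases j' with _ | n
          · intro _; norm_num; exact hdir
          intro hj
          have ha := ih (n + 1) (by omega) (by omega)
          have hb := ih n (by omega) (by omega)
          have hs := hstep (n + 1) (by omega)
          rw [show 2 * (n + 1) + 3 = 2 * (n + 1 + 1) + 1 from by ring] at hs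
          have hne1 : σ.symm (2 * (n + 1 + 1) + 1) ≠ σ.symm (2 * n + 1) := by
            intro h; have := hinj' _ _ h; omega
          have hne2 : σ.symm (2 * (n + 1 + 1) + 1) ≠ σ.symm (2 * (n + 1) + 1) := by
            intro h; have := hinj' _ _ h; omega
          omega
      have h0 := hodd_mem 0 (by omega)
      norm_num at h0
      have hJv := hup J le_rfl
      have hJm := hodd_mem J (by omega)
      have hs1 : σ.symm 1 = m + 1 := by omega
      have hσm1 : σ (m + 1) = 1 := by rw [← hs1, hgs]
      have ht := (htriG m 1 (by omega) (by omega) (by omega)).2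
      have hσm : σ m = 2 * m := hσeven m (by omega) (by omega)
      omega
    · -- decreasing case : σ = ρ
      have hdown : ∀ j, j ≤ J → σ.symm (2 * j + 1) + j = σ.symm 1 := by
        intro j
        induction j using Nat.strong_induction_on with
        | _ j ih =>
          rcases j with _ | j'
          · intro _; norm_num
          rcases j' with _ | n
          · intro _; norm_num; omega
          intro hj
          have ha := ih (n + 1) (by omega) (by omega)
          have hb := ih n (by omega) (by omega)
          have hs := hstep (n + 1) (by omega)
          rw [show 2 * (n + 1) + 3 = 2 * (n + 1 + 1) + 1 from by ring] at hs
          have hne1 : σ.symm (2 * (n + 1 + 1) + 1) ≠ σ.symm (2 * n + 1) := by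
            intro h; have := hinj' _ _ h; omega
          have hne2 : σ.symm (2 * (n + 1 + 1) + 1) ≠ σ.symm (2 * (n + 1) + 1) := by
            intro h; have := hinj' _ _ h; omega
          have hmm := hodd_mem (n + 1 + 1) (by omega)
          omega
      have h0 := hodd_mem 0 (by omega)
      norm_num at h0
      have hJv := hdown J le_rfl
      have hJm := hodd_mem J (by omega)
      have hs1 : σ.symm 1 = δ := by omega
      left
      intro i hi
      rw [Finset.mem_Icc] at hi
      by_cases hc : 2 * i ≤ δ
      · have := hσeven i hi.1 hc
        simp only [rhoFun, if_pos hc]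
        exact this
      · have hj : δ - i ≤ J := by omega
        have hv := hdown (δ - i) hj
        have hvi : σ.symm (2 * (δ - i) + 1) = i := by omega
        have : σ i = 2 * (δ - i) + 1 := by
          calc σ i = σ (σ.symm (2 * (δ - i) + 1)) := by rw [hvi]
          _ = 2 * (δ - i) + 1 := hgs _
        simp only [rhoFun, if_neg hc]
        exact this
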